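/- arXiv:2410.01924 — 5 statements merged into one kernel-verified Lean document; each statement's English description precedes it below -/
import Mathlib

section
/- Let α be a positive integer and let γ : I → ℝ² be a C², unit-speed (|γ'| = 1) curve defined on an interval I ⊆ ℝ whose total curvature satisfies ∫_I |γ''(s)| ds ≤ απ. Then for every x₀ ∈ ℝ² and every λ > 0, the Gaussian weighted length satisfies (4πλ)^{-1/2} ∫_I exp(-|γ(s)-x₀|²/(4λ)) ds ≤ 4α√2; in particular the entropy of γ is at most 4α√2. -/
open Real MeasureTheory Set Filter
open scoped RealInnerProductSpace ENNReal

noncomputable section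

/-- The Euclidean plane. -/
abbrev R2 := EuclideanSpace ℝ (Fin 2)

/-- The point of `ℝ²` with coordinates `(x, y)`. -/
def toR2 (x y : ℝ) : R2 := (WithLp.equiv 2 (Fin 2 → ℝ)).symm ![x, y]

/-- Counterclockwise rotation of the plane by `π/2`. -/
def Jrot (v : R2) : R2 := toR2 (-(v 1)) (v 0)

lemma Jrot_apply0 (v : R2) : Jrot v 0 = -(v 1) := rfl
lemma Jrot_apply1 (v : R2) : Jrot v 1 = v 0 := rfl
lemma inner_coord (v w : R2) : ⟪v, w⟫ = v 0 * w 0 + v 1 * w 1 := by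
  simp [PiLp.inner_apply, Fin.sum_univ_two, mul_comm]
lemma norm_sq_coord (v : R2) : ‖v‖ ^ 2 = v 0 ^ 2 + v 1 ^ 2 := by
  rw [← real_inner_self_eq_norm_sq, inner_coord]; ring
lemma inner_jrot_jrot (v w : R2) : ⟪Jrot v, Jrot w⟫ = ⟪v, w⟫ := by
  simp only [inner_coord, Jrot_apply0, Jrot_apply1]; ring
lemma inner_jrot_left (v w : R2) : ⟪Jrot v, w⟫ = -⟪v, Jrot w⟫ := by
  simp only [inner_coord, Jrot_apply0, Jrot_apply1]; ring
lemma norm_jrot (v : R2) : ‖Jrot v‖ = ‖v‖ := by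
  have h1 := norm_sq_coord (Jrot v)
  rw [Jrot_apply0, Jrot_apply1] at h1
  nlinarith [norm_sq_coord v, norm_nonneg v, norm_nonneg (Jrot v)]
lemma decomp (v w : R2) (hw : ‖w‖ = 1) :
    v = ⟪v, w⟫ • w + ⟪v, Jrot w⟫ • Jrot w := by
  have h1 : w 0 ^ 2 + w 1 ^ 2 = 1 := by rw [← norm_sq_coord, hw]; norm_num
  ext i
  fin_cases i
  · show v 0 = (⟪v, w⟫ • w + ⟪v, Jrot w⟫ • Jrot w) 0
    simp only [PiLp.add_apply, PiLp.smul_apply, smul_eq_mul, inner_coord, Jrot_apply0, Jrot_apply1]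
    linear_combination (-(v 0)) * h1
  · show v 1 = (⟪v, w⟫ • w + ⟪v, Jrot w⟫ • Jrot w) 1
    simp only [PiLp.add_apply, PiLp.smul_apply, smul_eq_mul, inner_coord, Jrot_apply0, Jrot_apply1]
    linear_combination (-(v 1)) * h1
lemma jrot_smul_add (a b : ℝ) (x y : R2) :
    Jrot (a • x + b • y) = a • Jrot x + b • Jrot y := by
  ext i
  fin_cases i
  · show Jrot (a • x + b • y) 0 = (a • Jrot x + b • Jrot y) 0
    simp only [Jrot_apply0, Jrot_apply1, PiLp.add_apply, PiLp.smul_apply, smul_eq_mul]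
    try ring
  · show Jrot (a • x + b • y) 1 = (a • Jrot x + b • Jrot y) 1
    simp only [Jrot_apply0, Jrot_apply1, PiLp.add_apply, PiLp.smul_apply, smul_eq_mul]
    try ring
lemma jrot_jrot (v : R2) : Jrot (Jrot v) = -v := by
  ext i
  fin_cases i
  · show Jrot (Jrot v) 0 = (-v) 0
    simp [Jrot_apply0, Jrot_apply1]
  · show Jrot (Jrot v) 1 = (-v) 1
    simp [Jrot_apply0, Jrot_apply1]


lemma ftc_within {κ : ℝ → ℝ} {I J : Set ℝ} (hI : OrdConnected I) (hκ : ContinuousOn κ I)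
    (hJI : J ⊆ I) {t₀ : ℝ} (ht₀ : t₀ ∈ I) {b : ℝ} (hb : b ∈ J) :
    HasDerivWithinAt (fun x => ∫ r in t₀..x, κ r) (κ b) J b := by
  have hbI := hJI hb
  have hint : ∀ x ∈ I, ∀ y ∈ I, IntervalIntegrable κ volume x y := fun x hx y hy =>
    (hκ.mono (hI.uIcc_subset hx hy)).intervalIntegrable
  rw [hasDerivWithinAt_iff_isLittleO]
  apply Asymptotics.isLittleO_iff.2
  intro c hc
  have hcont := hκ b hbI
  rw [Metric.continuousWithinAt_iff] at hcont
  obtain ⟨δ, hδ, hδ'⟩ := hcont c hc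
  rw [eventually_nhdsWithin_iff]
  refine Metric.eventually_nhds_iff.2 ⟨δ, hδ, fun {x'} hx'd hx'J => ?_⟩
  have hx'I := hJI hx'J
  have key : (∫ r in t₀..x', κ r) - (∫ r in t₀..b, κ r) = ∫ r in b..x', κ r :=
    intervalIntegral.integral_interval_sub_left (hint t₀ ht₀ x' hx'I) (hint t₀ ht₀ b hbI)
  have key2 : (∫ r in b..x', κ r) - (x' - b) • κ b = ∫ r in b..x', (κ r - κ b) := by
    rw [intervalIntegral.integral_sub (hint b hbI x' hx'I) intervalIntegrable_const,
      intervalIntegral.integral_const]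
  have bound : ‖∫ r in b..x', (κ r - κ b)‖ ≤ c * |x' - b| := by
    apply intervalIntegral.norm_integral_le_of_norm_le_const
    intro r hr
    have hruIcc : r ∈ Set.uIcc b x' := Set.uIoc_subset_uIcc hr
    have hrI : r ∈ I := hI.uIcc_subset hbI hx'I hruIcc
    have hrb : dist r b < δ := by
      have h1 : |r - b| ≤ |x' - b| := by
        rcases le_total b x' with h | h
        · rw [Set.uIoc_of_le h] at hr
          rw [abs_of_nonneg (by linarith [hr.1.le] : (0:ℝ) ≤ r - b),
            abs_of_nonneg (by linarith [hr.1.le.trans hr.2] : (0:ℝ) ≤ x' - b)]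
          linarith [hr.2]
        · rw [Set.uIoc_of_ge h] at hr
          rw [abs_of_nonpos (by linarith [hr.2] : r - b ≤ 0),
            abs_of_nonpos (by linarith : x' - b ≤ 0)]
          linarith [hr.1.le]
      rw [Real.dist_eq]
      calc |r - b| ≤ |x' - b| := h1
        _ = dist x' b := (Real.dist_eq x' b).symm
        _ < δ := hx'd
    have := hδ' hrI hrb
    rw [Real.dist_eq] at this
    exact this.le
  calc ‖(∫ r in t₀..x', κ r) - (∫ r in t₀..b, κ r) - (x' - b) • κ b‖
      = ‖∫ r in b..x', (κ r - κ b)‖ := by rw [key, ← key2]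
    _ ≤ c * |x' - b| := bound
    _ = c * ‖x' - b‖ := by rw [Real.norm_eq_abs]

lemma lintegral_image_eq {s : Set ℝ} {f f' : ℝ → ℝ} (hs : MeasurableSet s)
    (hf' : ∀ x ∈ s, HasDerivWithinAt f (f' x) s x) (hf : Set.InjOn f s) (g : ℝ → ℝ≥0∞) :
    ∫⁻ x in f '' s, g x = ∫⁻ x in s, ENNReal.ofReal |f' x| * g (f x) := by
  simpa only [ContinuousLinearMap.det_toSpanSingleton] using
    lintegral_image_eq_lintegral_abs_det_fderiv_mul volume hs
      (fun x hx => (hf' x hx).hasFDerivWithinAt) hf g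

lemma lintegral_gaussian (l : ℝ) (hl : 0 < l) :
    ∫⁻ v : ℝ, ENNReal.ofReal (Real.exp (-v ^ 2 / (4 * l))) = ENNReal.ofReal (Real.sqrt (4 * π * l)) := by
  have hb : (0:ℝ) < 1 / (4 * l) := by positivity
  have h1 : ∀ v : ℝ, -v ^ 2 / (4 * l) = -(1/(4*l)) * v ^ 2 := by intro v; field_simp
  have hint := integrable_exp_neg_mul_sq hb
  rw [show (fun v : ℝ => ENNReal.ofReal (Real.exp (-v ^ 2 / (4 * l)))) =
      fun v : ℝ => ENNReal.ofReal (Real.exp (-(1/(4*l)) * v ^ 2)) from funext fun v => by rw [h1]]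
  rw [← ofReal_integral_eq_lintegral_ofReal hint (Filter.Eventually.of_forall fun v => (Real.exp_pos _).le)]
  rw [integral_gaussian]
  congr 1
  rw [show π / (1/(4*l)) = 4 * π * l by field_simp]

/-- Lemma A: Gaussian weighted length of a graph-like piece. -/
lemma piece_bound {γ : ℝ → R2} {I J : Set ℝ} {T : ℝ → R2}
    (hJI : J ⊆ I) (hJm : MeasurableSet J) (hJc : Convex ℝ J)
    (hT : ∀ s ∈ I, HasDerivWithinAt γ (T s) I s)
    {e : R2} (he : ‖e‖ = 1)
    (hlow : ∀ s ∈ J, Real.sqrt 2 / 2 ≤ ⟪T s, e⟫)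
    (x₀ : R2) (l : ℝ) (hl : 0 < l) :
    ∫⁻ s in J, ENNReal.ofReal (Real.exp (-‖γ s - x₀‖ ^ 2 / (4 * l)))
      ≤ ENNReal.ofReal (Real.sqrt 2) * ENNReal.ofReal (Real.sqrt (4 * π * l)) := by
  set u : ℝ → ℝ := fun s => ⟪γ s - x₀, e⟫ with hu_def
  have hu' : ∀ s ∈ J, HasDerivWithinAt u ⟪T s, e⟫ J s := by
    intro s hs
    have h1 : HasDerivWithinAt (fun t => γ t - x₀) (T s) J s :=
      ((hT s (hJI hs)).mono hJI).sub_const x₀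
    have := h1.inner ℝ (hasDerivWithinAt_const s J e)
    simpa only [inner_zero_right, zero_add] using this
  have hpos : ∀ s ∈ J, (0:ℝ) < ⟪T s, e⟫ := fun s hs =>
    lt_of_lt_of_le (by positivity) (hlow s hs)
  have hmono : StrictMonoOn u J := by
    apply strictMonoOn_of_hasDerivWithinAt_pos hJc
      (fun s hs => (hu' s hs).continuousWithinAt)
      (fun s hs => ((hu' s (interior_subset hs)).mono interior_subset))
    exact fun s hs => hpos s (interior_subset hs)
  have hinj : Set.InjOn u J := hmono.injOn
  set g : ℝ → ℝ≥0∞ := fun v => ENNReal.ofReal (Real.exp (-v ^ 2 / (4 * l))) with hg_def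
  have key : ∀ s ∈ J,
      ENNReal.ofReal (Real.exp (-‖γ s - x₀‖ ^ 2 / (4 * l)))
        ≤ ENNReal.ofReal (Real.sqrt 2) * (ENNReal.ofReal |⟪T s, e⟫| * g (u s)) := by
    intro s hs
    have hCS : |u s| ≤ ‖γ s - x₀‖ := by
      calc |u s| = |⟪γ s - x₀, e⟫| := rfl
        _ ≤ ‖γ s - x₀‖ * ‖e‖ := abs_real_inner_le_norm _ _
        _ = ‖γ s - x₀‖ := by rw [he, mul_one]
    have h4l : (0:ℝ) < 4 * l := by positivity
    have h2 : u s ^ 2 ≤ ‖γ s - x₀‖ ^ 2 := by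
      have := pow_le_pow_left₀ (abs_nonneg (u s)) hCS 2
      rwa [sq_abs] at this
    have hexp : Real.exp (-‖γ s - x₀‖ ^ 2 / (4 * l)) ≤ Real.exp (-(u s) ^ 2 / (4 * l)) :=
      Real.exp_le_exp.2 ((div_le_div_iff_of_pos_right h4l).mpr (by linarith))
    have habs : |⟪T s, e⟫| = ⟪T s, e⟫ := abs_of_pos (hpos s hs)
    have hs2 : Real.sqrt 2 * Real.sqrt 2 = 2 := Real.mul_self_sqrt (by norm_num)
    have e2 : 1 ≤ Real.sqrt 2 * |⟪T s, e⟫| := by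
      rw [habs]
      nlinarith [hlow s hs, Real.sqrt_nonneg 2]
    simp only [hg_def]
    rw [← ENNReal.ofReal_mul (abs_nonneg _), ← ENNReal.ofReal_mul (Real.sqrt_nonneg 2)]
    apply ENNReal.ofReal_le_ofReal
    calc Real.exp (-‖γ s - x₀‖ ^ 2 / (4 * l)) ≤ Real.exp (-(u s) ^ 2 / (4 * l)) := hexp
      _ = 1 * Real.exp (-(u s) ^ 2 / (4 * l)) := (one_mul _).symm
      _ ≤ Real.sqrt 2 * |⟪T s, e⟫| * Real.exp (-(u s) ^ 2 / (4 * l)) :=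
          mul_le_mul_of_nonneg_right e2 (Real.exp_pos _).le
      _ = Real.sqrt 2 * (|⟪T s, e⟫| * Real.exp (-(u s) ^ 2 / (4 * l))) := by ring
  calc ∫⁻ s in J, ENNReal.ofReal (Real.exp (-‖γ s - x₀‖ ^ 2 / (4 * l)))
      ≤ ∫⁻ s in J, ENNReal.ofReal (Real.sqrt 2) * (ENNReal.ofReal |⟪T s, e⟫| * g (u s)) :=
        setLIntegral_mono' hJm key
    _ = ENNReal.ofReal (Real.sqrt 2) * ∫⁻ s in J, ENNReal.ofReal |⟪T s, e⟫| * g (u s) :=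
        lintegral_const_mul' _ _ ENNReal.ofReal_ne_top
    _ = ENNReal.ofReal (Real.sqrt 2) * ∫⁻ v in u '' J, g v := by
        rw [lintegral_image_eq hJm hu' hinj g]
    _ ≤ ENNReal.ofReal (Real.sqrt 2) * ∫⁻ v, g v :=
        by gcongr; exact Measure.restrict_le_self
    _ = ENNReal.ofReal (Real.sqrt 2) * ENNReal.ofReal (Real.sqrt (4 * π * l)) := by
        rw [hg_def, lintegral_gaussian l hl]

set_option maxHeartbeats 1000000 in
lemma angle_bound {γ : ℝ → R2} {I J : Set ℝ} (hI : OrdConnected I) (hIu : UniqueDiffOn ℝ I)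
    (hγ : ContDiffOn ℝ 2 γ I) (hunit : ∀ s ∈ I, ‖derivWithin γ I s‖ = 1)
    (hJI : J ⊆ I) (hJc : Convex ℝ J) {t₀ : ℝ} (ht₀ : t₀ ∈ J)
    (hcurv : ∀ s ∈ J, ∫⁻ r in Set.uIcc t₀ s,
        (‖derivWithin (derivWithin γ I) I r‖₊ : ℝ≥0∞) ≤ ENNReal.ofReal (π / 4)) :
    ∀ s ∈ J, Real.sqrt 2 / 2 ≤ ⟪derivWithin γ I s, derivWithin γ I t₀⟫ := by
  set T : ℝ → R2 := derivWithin γ I with hT_def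
  set A : ℝ → R2 := derivWithin T I with hA_def
  have ht₀I : t₀ ∈ I := hJI ht₀
  have hγ1 : ContDiffOn ℝ 1 T I := hγ.derivWithin hIu (by norm_num)
  have hTd : ∀ s ∈ I, HasDerivWithinAt T (A s) I s := fun s hs =>
    ((hγ1.differentiableOn (by norm_num)) s hs).hasDerivWithinAt
  have hTcont : ContinuousOn T I := hγ1.continuousOn
  have hAcont : ContinuousOn A I := hγ1.continuousOn_derivWithin hIu (le_refl 1)
  have hTunit : ∀ s ∈ I, ‖T s‖ = 1 := hunit
  -- orthogonality
  have orth : ∀ s ∈ I, ⟪A s, T s⟫ = 0 := by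
    intro s hs
    have h1 : HasDerivWithinAt (fun t => ⟪T t, T t⟫) (⟪T s, A s⟫ + ⟪A s, T s⟫) I s :=
      (hTd s hs).inner ℝ (hTd s hs)
    have h2 : HasDerivWithinAt (fun t => ⟪T t, T t⟫) 0 I s := by
      apply (hasDerivWithinAt_const s I (1:ℝ)).congr
      · intro t ht
        rw [real_inner_self_eq_norm_sq, hTunit t ht]; norm_num
      · rw [real_inner_self_eq_norm_sq, hTunit s hs]; norm_num
    have h5 : ⟪T s, A s⟫ + ⟪A s, T s⟫ = 0 := by
      rw [← h1.derivWithin (hIu s hs), h2.derivWithin (hIu s hs)]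
    have h6 : ⟪A s, T s⟫ = ⟪T s, A s⟫ := real_inner_comm _ _
    linarith [h5, h6]
  -- signed curvature
  set κ : ℝ → ℝ := fun s => ⟪A s, Jrot (T s)⟫ with hκ_def
  have hJrotSub : ∀ v w : R2, Jrot v - Jrot w = Jrot (v - w) := by
    intro v w
    ext i
    fin_cases i
    · show (Jrot v - Jrot w) 0 = Jrot (v - w) 0
      simp only [Jrot_apply0, PiLp.sub_apply]; ring
    · show (Jrot v - Jrot w) 1 = Jrot (v - w) 1
      simp only [Jrot_apply1, PiLp.sub_apply]
  have hJrotCont : Continuous (fun v : R2 => Jrot v) := by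
    have : Isometry (fun v : R2 => Jrot v) := Isometry.of_dist_eq fun v w => by
      rw [dist_eq_norm, dist_eq_norm, hJrotSub, norm_jrot]
    exact this.continuous
  have hκcont : ContinuousOn κ I :=
    ContinuousOn.inner hAcont (hJrotCont.comp_continuousOn hTcont)
  have hAκ : ∀ s ∈ I, A s = κ s • Jrot (T s) := by
    intro s hs
    have := decomp (A s) (T s) (hTunit s hs)
    rwa [orth s hs, zero_smul, zero_add] at this
  have hnormA : ∀ s ∈ I, ‖A s‖ = |κ s| := by
    intro s hs
    rw [hAκ s hs, norm_smul, norm_jrot, hTunit s hs, mul_one, Real.norm_eq_abs]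
  -- the angle
  set θ : ℝ → ℝ := fun x => ∫ r in t₀..x, κ r with hθ_def
  have hθd : ∀ s ∈ J, HasDerivWithinAt θ (κ s) J s := fun s hs =>
    ftc_within hI hκcont hJI ht₀I hs
  set e : R2 := T t₀ with he_def
  have he : ‖e‖ = 1 := hTunit t₀ ht₀I
  set f₀ : R2 := Jrot e with hf₀_def
  set V : ℝ → R2 := fun s => Real.cos (θ s) • e + Real.sin (θ s) • f₀ with hV_def
  -- derivative of V
  have hVd : ∀ s ∈ J, HasDerivWithinAt V (κ s • Jrot (V s)) J s := by
    intro s hs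
    have h1 : HasDerivWithinAt (fun x => Real.cos (θ x) • e)
        ((-Real.sin (θ s) * κ s) • e) J s := ((hθd s hs).cos).smul_const e
    have h2 : HasDerivWithinAt (fun x => Real.sin (θ x) • f₀)
        ((Real.cos (θ s) * κ s) • f₀) J s := ((hθd s hs).sin).smul_const f₀
    have h3 := h1.add h2
    have heq : (-Real.sin (θ s) * κ s) • e + (Real.cos (θ s) * κ s) • f₀
        = κ s • Jrot (V s) := by
      rw [hV_def]
      show _ = κ s • Jrot (Real.cos (θ s) • e + Real.sin (θ s) • f₀)
      rw [jrot_smul_add, ← hf₀_def, jrot_jrot]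
      module
    exact heq ▸ h3
  -- inner product ⟪T, V⟫ is constant equal to 1 on J
  have hTV : ∀ s ∈ J, ⟪T s, V s⟫ = 1 := by
    intro s hs
    have hder : ∀ x ∈ J, HasDerivWithinAt (fun t => ⟪T t, V t⟫) 0 J x := by
      intro x hx
      have h1 := ((hTd x (hJI hx)).mono hJI).inner ℝ (hVd x hx)
      have h2 : ⟪T x, κ x • Jrot (V x)⟫ + ⟪A x, V x⟫ = 0 := by
        rw [hAκ x (hJI hx), real_inner_smul_right, real_inner_smul_left,
          inner_jrot_left (T x) (V x)]
        ring
      rwa [h2] at h1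
    have hbound := hJc.norm_image_sub_le_of_norm_hasDerivWithin_le (C := 0) hder
      (fun x _ => by simp) ht₀ hs
    have ht0V : ⟪T t₀, V t₀⟫ = 1 := by
      have hθ0 : θ t₀ = 0 := intervalIntegral.integral_same
      rw [hV_def]
      show ⟪T t₀, Real.cos (θ t₀) • e + Real.sin (θ t₀) • f₀⟫ = 1
      rw [hθ0, Real.cos_zero, Real.sin_zero, one_smul, zero_smul, add_zero, he_def,
        real_inner_self_eq_norm_sq, hTunit t₀ ht₀I]
      norm_num
    have : ‖⟪T s, V s⟫ - ⟪T t₀, V t₀⟫‖ ≤ 0 := by simpa using hbound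
    have := norm_le_zero_iff.mp this
    rw [sub_eq_zero] at this
    rw [this, ht0V]
  -- V is unit and T = V on J
  have hVunit : ∀ s, ‖V s‖ = 1 := by
    intro s
    have hef : ⟪e, f₀⟫ = 0 := by
      have h1 := inner_jrot_left e e
      have h2 : ⟪Jrot e, e⟫ = ⟪e, Jrot e⟫ := real_inner_comm _ _
      rw [hf₀_def]; linarith [h1, h2]
    have hff : ⟪f₀, f₀⟫ = 1 := by
      rw [hf₀_def, inner_jrot_jrot, real_inner_self_eq_norm_sq, he]; norm_num
    have hee : ⟪e, e⟫ = 1 := by rw [real_inner_self_eq_norm_sq, he]; norm_num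
    have hVV : ⟪V s, V s⟫ = 1 := by
      rw [hV_def]
      show ⟪Real.cos (θ s) • e + Real.sin (θ s) • f₀,
            Real.cos (θ s) • e + Real.sin (θ s) • f₀⟫ = 1
      have hfe : ⟪f₀, e⟫ = 0 := by rw [real_inner_comm]; exact hef
      simp only [inner_add_add_self, real_inner_smul_left, real_inner_smul_right,
        hee, hef, hff, hfe]
      linear_combination Real.sin_sq_add_cos_sq (θ s)
    have := real_inner_self_eq_norm_sq (V s) ▸ hVV
    nlinarith [norm_nonneg (V s)]
  have hTeqV : ∀ s ∈ J, T s = V s := by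
    intro s hs
    have h1 : ‖T s - V s‖ ^ 2 = 0 := by
      rw [norm_sub_sq_real, hTunit s (hJI hs), hVunit s, hTV s hs]; norm_num
    have h2 : ‖T s - V s‖ = 0 := by nlinarith [norm_nonneg (T s - V s)]
    exact sub_eq_zero.mp (norm_eq_zero.mp h2)
  -- bound on θ
  have hθbound : ∀ s ∈ J, |θ s| ≤ π / 4 := by
    intro s hs
    have hsI := hJI hs
    have huIcc : Set.uIcc t₀ s ⊆ I := hI.uIcc_subset ht₀I hsI
    have hκI : ContinuousOn (fun r => |κ r|) (Set.uIcc t₀ s) := (hκcont.mono huIcc).abs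
    have habs : |θ s| ≤ |(∫ r in t₀..s, |κ r|)| := by
      rw [hθ_def]
      simpa [Real.norm_eq_abs] using intervalIntegral.norm_integral_le_abs_integral_norm
        (f := κ) (a := t₀) (b := s) (μ := volume)
    have hset : |(∫ r in t₀..s, |κ r|)| = ∫ r in Set.uIcc t₀ s, |κ r| := by
      rcases le_total t₀ s with h | h
      · rw [intervalIntegral.integral_of_le h, Set.uIcc_of_le h,
          ← integral_Icc_eq_integral_Ioc, abs_of_nonneg]
        exact setIntegral_nonneg measurableSet_Icc fun r _ => abs_nonneg _
      · rw [intervalIntegral.integral_symm, intervalIntegral.integral_of_le h,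
          Set.uIcc_of_ge h, ← integral_Icc_eq_integral_Ioc, abs_neg, abs_of_nonneg]
        exact setIntegral_nonneg measurableSet_Icc fun r _ => abs_nonneg _
    have hint : IntegrableOn (fun r => |κ r|) (Set.uIcc t₀ s) volume :=
      hκI.integrableOn_compact isCompact_uIcc
    have hlin : ENNReal.ofReal (∫ r in Set.uIcc t₀ s, |κ r|)
        = ∫⁻ r in Set.uIcc t₀ s, ENNReal.ofReal |κ r| :=
      ofReal_integral_eq_lintegral_ofReal hint
        (Filter.Eventually.of_forall fun r => abs_nonneg _)
    have hcongr : ∫⁻ r in Set.uIcc t₀ s, ENNReal.ofReal |κ r|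
        = ∫⁻ r in Set.uIcc t₀ s, (‖A r‖₊ : ℝ≥0∞) := by
      apply setLIntegral_congr_fun measurableSet_uIcc
      intro r hr
      show ENNReal.ofReal |κ r| = (‖A r‖₊ : ℝ≥0∞)
      rw [show |κ r| = ‖A r‖ from (hnormA r (huIcc hr)).symm, ofReal_norm, enorm_eq_nnnorm]
    have hle : ENNReal.ofReal (∫ r in Set.uIcc t₀ s, |κ r|) ≤ ENNReal.ofReal (π / 4) := by
      rw [hlin, hcongr]; exact hcurv s hs
    have h2 : ∫ r in Set.uIcc t₀ s, |κ r| ≤ π / 4 := by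
      have hpos : (0:ℝ) ≤ π / 4 := by positivity
      exact (ENNReal.ofReal_le_ofReal_iff hpos).mp hle
    calc |θ s| ≤ |(∫ r in t₀..s, |κ r|)| := habs
      _ = ∫ r in Set.uIcc t₀ s, |κ r| := hset
      _ ≤ π / 4 := h2
  -- conclusion
  intro s hs
  have hcos : ⟪T s, e⟫ = Real.cos (θ s) := by
    rw [hTeqV s hs, hV_def]
    show ⟪Real.cos (θ s) • e + Real.sin (θ s) • f₀, e⟫ = _
    rw [inner_add_left, real_inner_smul_left, real_inner_smul_left,
      real_inner_self_eq_norm_sq, he]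
    have hef : ⟪f₀, e⟫ = 0 := by
      have h1 := inner_jrot_left e e
      have h2 : ⟪Jrot e, e⟫ = ⟪e, Jrot e⟫ := real_inner_comm _ _
      rw [hf₀_def]; linarith [h1, h2]
    rw [hef]; ring
  rw [hcos]
  have h9 : Real.cos (π / 4) ≤ Real.cos |θ s| :=
    Real.cos_le_cos_of_nonneg_of_le_pi (abs_nonneg (θ s)) (by linarith [Real.pi_pos])
      (hθbound s hs)
  calc Real.sqrt 2 / 2 = Real.cos (π / 4) := Real.cos_pi_div_four.symm
    _ ≤ Real.cos |θ s| := h9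
    _ = Real.cos (θ s) := Real.cos_abs (θ s)

set_option maxHeartbeats 1000000 in
/-- A `C²` unit-speed planar curve on an interval `I` with total curvature
at most `α·π` (`α` a positive integer) has all Gaussian weighted lengths, hence entropy,
at most `4α√2`. -/
theorem entropy_le_of_total_curvature_le
    (α : ℕ) (hα : 0 < α) (γ : ℝ → R2) (I : Set ℝ) (hI : OrdConnected I)
    (hγ : ContDiffOn ℝ 2 γ I)
    (hunit : ∀ s ∈ I, ‖derivWithin γ I s‖ = 1)
    (hTC : ∫⁻ s in I, (‖derivWithin (derivWithin γ I) I s‖₊ : ℝ≥0∞)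
      ≤ ENNReal.ofReal ((α : ℝ) * π)) :
    ∀ x₀ : R2, ∀ l : ℝ, 0 < l →
      (ENNReal.ofReal (Real.sqrt (4 * π * l)))⁻¹ *
        (∫⁻ s in I, ENNReal.ofReal (Real.exp (-‖γ s - x₀‖ ^ 2 / (4 * l))))
      ≤ ENNReal.ofReal (4 * (α : ℝ) * Real.sqrt 2) := by
  intro x₀ l hl
  set T : ℝ → R2 := derivWithin γ I with hT_def
  set A : ℝ → R2 := derivWithin T I with hA_def
  set g : ℝ → ℝ≥0∞ := fun s => ENNReal.ofReal (Real.exp (-‖γ s - x₀‖ ^ 2 / (4 * l))) with hg_def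
  by_cases hsing : I.Subsingleton
  · have h0 : volume I = 0 := hsing.measure_zero volume
    have : ∫⁻ s in I, g s = 0 := setLIntegral_measure_zero I g h0
    rw [this, mul_zero]
    exact zero_le
  -- non-degenerate case
  rw [Set.not_subsingleton_iff] at hsing
  obtain ⟨p, hp, q, hq, hpq⟩ := hsing
  have hIconv : Convex ℝ I := convex_iff_ordConnected.mpr hI
  have hIint : (interior I).Nonempty := by
    rcases lt_or_gt_of_ne hpq with h | h
    · have hsub : Set.Ioo p q ⊆ interior I :=
        interior_mono (hI.out hp hq) |>.trans' (by rw [interior_Icc])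
      exact ⟨(p + q) / 2, hsub ⟨by linarith, by linarith⟩⟩
    · have hsub : Set.Ioo q p ⊆ interior I :=
        interior_mono (hI.out hq hp) |>.trans' (by rw [interior_Icc])
      exact ⟨(p + q) / 2, hsub ⟨by linarith, by linarith⟩⟩
  have hIu : UniqueDiffOn ℝ I := uniqueDiffOn_convex hIconv hIint
  have hγd : ∀ s ∈ I, HasDerivWithinAt γ (T s) I s := fun s hs =>
    ((hγ.differentiableOn (by norm_num)) s hs).hasDerivWithinAt
  -- curvature mass function
  set N : ℕ := 4 * α with hN_def
  have hNpos : 0 < N := by positivity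
  set c : ℝ := π / 4 with hc_def
  have hcpos : 0 < c := by rw [hc_def]; positivity
  set L : ℝ → ℝ≥0∞ := fun s => ∫⁻ r in I ∩ Set.Iic s, (‖A r‖₊ : ℝ≥0∞) with hL_def
  have hLle : ∀ s, L s ≤ ENNReal.ofReal ((α : ℝ) * π) := fun s =>
    (lintegral_mono_set Set.inter_subset_left).trans hTC
  have hLfin : ∀ s, L s ≠ ⊤ := fun s => ((hLle s).trans_lt ENNReal.ofReal_lt_top).ne
  set G : ℝ → ℝ := fun s => (L s).toReal with hG_def
  have hGnn : ∀ s, 0 ≤ G s := fun s => ENNReal.toReal_nonneg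
  have hGmono : Monotone G := by
    intro s t hst
    exact ENNReal.toReal_mono (hLfin t)
      (lintegral_mono_set (Set.inter_subset_inter_right I (Set.Iic_subset_Iic.mpr hst)))
  have hGle : ∀ s, G s ≤ (N : ℝ) * c := by
    intro s
    have h1 : G s ≤ (α : ℝ) * π :=
      ENNReal.toReal_le_of_le_ofReal (by positivity) (hLle s)
    have h2 : (N : ℝ) * c = (α : ℝ) * π := by
      rw [hN_def, hc_def]; push_cast; ring
    linarith
  -- the pieces
  set J : ℕ → Set ℝ := fun k => I ∩ G ⁻¹' (Set.Icc ((k : ℝ) * c) ((k + 1 : ℝ) * c)) with hJ_def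
  have hJI : ∀ k, J k ⊆ I := fun k => Set.inter_subset_left
  have hJoc : ∀ k, OrdConnected (J k) := fun k =>
    hI.inter ((ordConnected_Icc).preimage_mono hGmono)
  have hJconv : ∀ k, Convex ℝ (J k) := fun k => convex_iff_ordConnected.mpr (hJoc k)
  have hJmeas : ∀ k, MeasurableSet (J k) := fun k => (hJoc k).measurableSet
  -- covering
  have hex : ∀ s : ℝ, 0 ≤ G s → G s ≤ (N : ℝ) * c →
      ∃ k : ℕ, k < N ∧ (k : ℝ) * c ≤ G s ∧ G s ≤ ((k : ℝ) + 1) * c := by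
    intro s h0 h1
    refine ⟨min (⌊G s / c⌋₊) (N - 1), lt_of_le_of_lt (min_le_right _ _) (Nat.pred_lt hNpos.ne'), ?_, ?_⟩
    · rcases le_or_gt (⌊G s / c⌋₊) (N - 1) with h | h
      · rw [min_eq_left h]
        have h2 : (⌊G s / c⌋₊ : ℝ) ≤ G s / c := Nat.floor_le (by positivity)
        calc (⌊G s / c⌋₊ : ℝ) * c ≤ (G s / c) * c := mul_le_mul_of_nonneg_right h2 hcpos.le
          _ = G s := by field_simp
      · rw [min_eq_right h.le]
        have hNf : N ≤ ⌊G s / c⌋₊ := by omega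
        have h2 : (N : ℝ) ≤ G s / c := by
          exact_mod_cast (Nat.le_floor_iff (by positivity : (0:ℝ) ≤ G s / c)).mp hNf
        have h3 : (N : ℝ) * c ≤ G s := by
          calc (N : ℝ) * c ≤ (G s / c) * c := mul_le_mul_of_nonneg_right h2 hcpos.le
            _ = G s := by field_simp
        have h4 : ((N - 1 : ℕ) : ℝ) ≤ (N : ℝ) := by exact_mod_cast Nat.sub_le N 1
        calc ((N - 1 : ℕ) : ℝ) * c ≤ (N : ℝ) * c := mul_le_mul_of_nonneg_right h4 hcpos.le
          _ ≤ G s := h3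
    · rcases le_or_gt (⌊G s / c⌋₊) (N - 1) with h | h
      · rw [min_eq_left h]
        have h2 : G s / c < ⌊G s / c⌋₊ + 1 := Nat.lt_floor_add_one _
        have h3 : G s < ((⌊G s / c⌋₊ : ℝ) + 1) * c := by
          calc G s = (G s / c) * c := by field_simp
            _ < ((⌊G s / c⌋₊ : ℝ) + 1) * c := mul_lt_mul_of_pos_right h2 hcpos
        exact h3.le
      · rw [min_eq_right h.le]
        have h4 : ((N - 1 : ℕ) : ℝ) + 1 = (N : ℝ) := by
          have : (N - 1 : ℕ) + 1 = N := Nat.succ_pred_eq_of_pos hNpos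
          exact_mod_cast congrArg (Nat.cast (R := ℝ)) this
        rw [h4]
        exact h1
  have hcover : I ⊆ ⋃ i : Fin N, J i := by
    intro s hs
    obtain ⟨k, hkN, hk1, hk2⟩ := hex s (hGnn s) (hGle s)
    exact Set.mem_iUnion.2 ⟨⟨k, hkN⟩, hs, hk1, hk2⟩
  -- curvature bound on each piece
  have hcurvJ : ∀ k, ∀ t₀ ∈ J k, ∀ s ∈ J k,
      ∫⁻ r in Set.uIcc t₀ s, (‖A r‖₊ : ℝ≥0∞) ≤ ENNReal.ofReal c := by
    intro k t₀ ht₀ s hs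
    set a : ℝ := min t₀ s with ha_def
    set b : ℝ := max t₀ s with hb_def
    have hab : a ≤ b := min_le_max
    have haJ : a ∈ J k := by
      rcases min_choice t₀ s with h | h <;> rw [ha_def, h]
      exacts [ht₀, hs]
    have hbJ : b ∈ J k := by
      rcases max_choice t₀ s with h | h <;> rw [hb_def, h]
      exacts [ht₀, hs]
    have haI : a ∈ I := hJI k haJ
    have hbI : b ∈ I := hJI k hbJ
    have hsplit : (I ∩ Set.Iic b) = (I ∩ Set.Iic a) ∪ Set.Ioc a b := by
      ext x
      constructor
      · rintro ⟨hxI, hxb⟩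
        rcases le_or_gt x a with h | h
        · exact Or.inl ⟨hxI, h⟩
        · exact Or.inr ⟨h, hxb⟩
      · rintro (⟨hxI, hxa⟩ | ⟨hxa, hxb⟩)
        · exact ⟨hxI, hxa.trans hab⟩
        · exact ⟨hI.out haI hbI ⟨hxa.le, hxb⟩, hxb⟩
    have hdisj : Disjoint (I ∩ Set.Iic a) (Set.Ioc a b) :=
      Set.disjoint_left.mpr fun x ⟨_, hxa⟩ hx => absurd hxa (not_le.mpr hx.1)
    have hadd : L b = L a + ∫⁻ r in Set.Ioc a b, (‖A r‖₊ : ℝ≥0∞) := by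
      rw [hL_def]
      show ∫⁻ r in I ∩ Set.Iic b, _ = _
      rw [hsplit, lintegral_union measurableSet_Ioc hdisj]
    have hIocfin : (∫⁻ r in Set.Ioc a b, (‖A r‖₊ : ℝ≥0∞)) ≠ ⊤ := by
      intro htop
      exact hLfin b (by rw [hadd, htop, add_top])
    have htoReal : (∫⁻ r in Set.Ioc a b, (‖A r‖₊ : ℝ≥0∞)).toReal = G b - G a := by
      rw [hG_def]
      show _ = (L b).toReal - (L a).toReal
      rw [hadd, ENNReal.toReal_add (hLfin a) hIocfin]
      ring
    have hGdiff : G b - G a ≤ c := by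
      obtain ⟨-, h1, h2⟩ := haJ
      obtain ⟨-, h3, h4⟩ := hbJ
      have := h1; have := h4
      simp only [Set.mem_preimage, Set.mem_Icc] at *
      linarith
    have hIocle : ∫⁻ r in Set.Ioc a b, (‖A r‖₊ : ℝ≥0∞) ≤ ENNReal.ofReal c := by
      rw [← ENNReal.ofReal_toReal hIocfin]
      exact ENNReal.ofReal_le_ofReal (htoReal ▸ hGdiff)
    have huIcc : Set.uIcc t₀ s = Set.Icc a b := rfl
    rw [huIcc]
    have hIcc : (Set.Icc a b : Set ℝ) ⊆ {a} ∪ Set.Ioc a b := by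
      intro x ⟨h1, h2⟩
      rcases eq_or_lt_of_le h1 with h | h
      · exact Or.inl (by simp [← h])
      · exact Or.inr ⟨h, h2⟩
    calc ∫⁻ r in Set.Icc a b, (‖A r‖₊ : ℝ≥0∞)
        ≤ ∫⁻ r in ({a} ∪ Set.Ioc a b : Set ℝ), (‖A r‖₊ : ℝ≥0∞) := lintegral_mono_set hIcc
      _ ≤ (∫⁻ r in ({a} : Set ℝ), (‖A r‖₊ : ℝ≥0∞)) + ∫⁻ r in Set.Ioc a b, (‖A r‖₊ : ℝ≥0∞) :=
          lintegral_union_le _ _ _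
      _ = ∫⁻ r in Set.Ioc a b, (‖A r‖₊ : ℝ≥0∞) := by
          rw [setLIntegral_measure_zero _ _ (Real.volume_singleton), zero_add]
      _ ≤ ENNReal.ofReal c := hIocle
  -- bound for each piece
  have hpiece : ∀ k : ℕ, ∫⁻ s in J k, g s
      ≤ ENNReal.ofReal (Real.sqrt 2) * ENNReal.ofReal (Real.sqrt (4 * π * l)) := by
    intro k
    rcases Set.eq_empty_or_nonempty (J k) with h | ⟨t₀, ht₀⟩
    · rw [h]
      simp
    · have hlow := angle_bound hI hIu hγ hunit (hJI k) (hJconv k) ht₀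
        (fun s hs => hcurvJ k t₀ ht₀ s hs)
      exact piece_bound (hJI k) (hJmeas k) (hJconv k) hγd (hunit t₀ (hJI k ht₀)) hlow x₀ l hl
  -- assembling
  have hsum : ∫⁻ s in I, g s
      ≤ (N : ℝ≥0∞) * (ENNReal.ofReal (Real.sqrt 2) * ENNReal.ofReal (Real.sqrt (4 * π * l))) := by
    set B := ENNReal.ofReal (Real.sqrt 2) * ENNReal.ofReal (Real.sqrt (4 * π * l)) with hB_def
    calc ∫⁻ s in I, g s ≤ ∫⁻ s in ⋃ i : Fin N, J i, g s := lintegral_mono_set hcover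
      _ ≤ ∑' i : Fin N, ∫⁻ s in J i, g s := lintegral_iUnion_le _ _
      _ = ∑ i : Fin N, ∫⁻ s in J i, g s := tsum_fintype _
      _ ≤ ∑ _i : Fin N, B := Finset.sum_le_sum fun i _ => hpiece i
      _ = (N : ℝ≥0∞) * B := by
          rw [Finset.sum_const, Finset.card_univ, Fintype.card_fin, nsmul_eq_mul]
  -- final arithmetic
  set C := ENNReal.ofReal (Real.sqrt (4 * π * l)) with hC_def
  have hC0 : C ≠ 0 := by
    rw [hC_def]
    simp only [ne_eq, ENNReal.ofReal_eq_zero, not_le]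
    positivity
  have hCtop : C ≠ ⊤ := ENNReal.ofReal_ne_top
  calc C⁻¹ * ∫⁻ s in I, g s
      ≤ C⁻¹ * ((N : ℝ≥0∞) * (ENNReal.ofReal (Real.sqrt 2) * C)) := by
        gcongr
    _ = (N : ℝ≥0∞) * ENNReal.ofReal (Real.sqrt 2) * (C⁻¹ * C) := by ring
    _ = (N : ℝ≥0∞) * ENNReal.ofReal (Real.sqrt 2) := by
        rw [ENNReal.inv_mul_cancel hC0 hCtop, mul_one]
    _ = ENNReal.ofReal (4 * (α : ℝ) * Real.sqrt 2) := by
        rw [← ENNReal.ofReal_natCast N, ← ENNReal.ofReal_mul (by positivity)]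
        congr 1
        rw [hN_def]
        push_cast
        ring
end
end

section
/- Let γ : I → ℝ² be a C², unit-speed (|γ'| = 1) curve on an interval I ⊆ ℝ with total curvature ∫_I |γ''(s)| ds ≤ π/4. Then for every x₀ ∈ ℝ² and every λ > 0, the Gaussian weighted length satisfies (4πλ)^{-1/2} ∫_I exp(-|γ(s)-x₀|²/(4λ)) ds ≤ √2; in particular the entropy of γ is at most √2. -/
open Real MeasureTheory Set Filter
open scoped RealInnerProductSpace ENNReal
open scoped Interval

noncomputable section

set_option maxHeartbeats 2000000 in
/-- A `C²` unit-speed planar curve on an interval `I` with total curvature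
at most `π/4` has all Gaussian weighted lengths, hence entropy, at most `√2`. -/
theorem entropy_le_sqrt_two_of_total_curvature_le
    (γ : ℝ → R2) (I : Set ℝ) (hI : OrdConnected I)
    (hγ : ContDiffOn ℝ 2 γ I)
    (hunit : ∀ s ∈ I, ‖derivWithin γ I s‖ = 1)
    (hTC : ∫⁻ s in I, (‖derivWithin (derivWithin γ I) I s‖₊ : ℝ≥0∞)
      ≤ ENNReal.ofReal (π / 4)) :
    ∀ x₀ : R2, ∀ l : ℝ, 0 < l →
      (ENNReal.ofReal (Real.sqrt (4 * π * l)))⁻¹ *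
        (∫⁻ s in I, ENNReal.ofReal (Real.exp (-‖γ s - x₀‖ ^ 2 / (4 * l))))
      ≤ ENNReal.ofReal (Real.sqrt 2) := by
  intro x₀ l hl
  have hconv : Convex ℝ I := hI.convex
  have hImeas : MeasurableSet I := hI.measurableSet
  by_cases hsub : I.Subsingleton
  · have h0 : volume I = 0 := hsub.measure_zero volume
    rw [setLIntegral_measure_zero _ _ h0, mul_zero]
    exact zero_le
  -- Main case : I has at least two points
  obtain ⟨s₀, hs₀, y₀, hy₀, hne⟩ := Set.not_subsingleton_iff.1 hsub
  have hint : (interior I).Nonempty := by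
    have key : ∀ u v : ℝ, u ∈ I → v ∈ I → u < v → (interior I).Nonempty := by
      intro u v hu hv huv
      exact ⟨(u + v) / 2, interior_mono (hI.out hu hv)
        (by rw [interior_Icc]; exact ⟨by linarith, by linarith⟩)⟩
    rcases hne.lt_or_gt with h | h
    · exact key _ _ hs₀ hy₀ h
    · exact key _ _ hy₀ hs₀ h
  have hUD : UniqueDiffOn ℝ I := uniqueDiffOn_convex hconv hint
  -- the unit tangent and its derivative
  set T := derivWithin γ I with hTdef
  set T' := derivWithin T I with hT'def
  have hdiffγ : DifferentiableOn ℝ γ I := hγ.differentiableOn (by norm_num)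
  have hγ' : ∀ s ∈ I, HasDerivWithinAt γ (T s) I s := fun s hs => (hdiffγ s hs).hasDerivWithinAt
  have hT1 : ContDiffOn ℝ 1 T I := hγ.derivWithin hUD (by norm_num)
  have hTcont : ContinuousOn T I := hT1.continuousOn
  have hdiffT : DifferentiableOn ℝ T I := hT1.differentiableOn one_ne_zero
  have hT'cont : ContinuousOn T' I := hT1.continuousOn_derivWithin hUD le_rfl
  have hTd : ∀ s ∈ I, HasDerivWithinAt T (T' s) I s := fun s hs => (hdiffT s hs).hasDerivWithinAt
  -- coordinates
  have hai : ∀ (i : Fin 2), ∀ s ∈ I, HasDerivWithinAt (fun t => T t i) (T' s i) I s := by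
    intro i s hs
    have h := (EuclideanSpace.proj i).hasFDerivAt.comp_hasDerivWithinAt s (hTd s hs)
    simpa [Function.comp_def, PiLp.proj_apply] using h
  have hγi : ∀ (i : Fin 2), ∀ s ∈ I, HasDerivWithinAt (fun t => γ t i) (T s i) I s := by
    intro i s hs
    have h := (EuclideanSpace.proj i).hasFDerivAt.comp_hasDerivWithinAt s (hγ' s hs)
    simpa [Function.comp_def, PiLp.proj_apply] using h
  have hTicont : ∀ i : Fin 2, ContinuousOn (fun s => T s i) I :=
    fun i => (EuclideanSpace.proj i).continuous.comp_continuousOn hTcont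
  have hT'icont : ∀ i : Fin 2, ContinuousOn (fun s => T' s i) I :=
    fun i => (EuclideanSpace.proj i).continuous.comp_continuousOn hT'cont
  have hnorm : ∀ s ∈ I, (T s 0) ^ 2 + (T s 1) ^ 2 = 1 := by
    intro s hs
    have h := hunit s hs
    rw [EuclideanSpace.norm_eq, Real.sqrt_eq_one] at h
    simpa [Fin.sum_univ_two, sq_abs] using h
  -- orthogonality T ⟂ T'
  have horth : ∀ s ∈ I, T s 0 * T' s 0 + T s 1 * T' s 1 = 0 := by
    intro s hs
    have h1 : HasDerivWithinAt (fun t => (T t 0) ^ 2 + (T t 1) ^ 2)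
        ((2 : ℕ) * (T s 0) ^ 1 * T' s 0 + (2 : ℕ) * (T s 1) ^ 1 * T' s 1) I s :=
      ((hai 0 s hs).pow 2).add ((hai 1 s hs).pow 2)
    have h2 : HasDerivWithinAt (fun _ : ℝ => (1 : ℝ)) 0 I s := hasDerivWithinAt_const s I 1
    have h2' : HasDerivWithinAt (fun t => (T t 0) ^ 2 + (T t 1) ^ 2) 0 I s :=
      h2.congr (fun t ht => (hnorm t ht)) (hnorm s hs)
    have := (h1.derivWithin (hUD s hs)).symm.trans (h2'.derivWithin (hUD s hs))
    push_cast at this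
    nlinarith [this]
  -- the signed curvature
  set κ : ℝ → ℝ := fun s => T s 0 * T' s 1 - T' s 0 * T s 1 with hκdef
  have hab : ∀ s ∈ I, T' s 0 = -(κ s) * T s 1 ∧ T' s 1 = κ s * T s 0 := by
    intro s hs
    have H1 := hnorm s hs
    have H2 := horth s hs
    constructor
    · simp only [hκdef]
      linear_combination (-(T' s 0)) * H1 + (T s 0) * H2
    · simp only [hκdef]
      linear_combination (-(T' s 1)) * H1 + (T s 1) * H2
  have hκcont : ContinuousOn κ I := ((hTicont 0).mul (hT'icont 1)).sub ((hT'icont 0).mul (hTicont 1))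
  have hκle : ∀ s ∈ I, |κ s| ≤ ‖T' s‖ := by
    intro s hs
    have hn : ‖T' s‖ ^ 2 = (T' s 0) ^ 2 + (T' s 1) ^ 2 := by
      rw [EuclideanSpace.norm_eq, Real.sq_sqrt (by positivity)]
      simp [Fin.sum_univ_two, sq_abs]
    have H1 := hnorm s hs
    have H2 := horth s hs
    have hsq : κ s ^ 2 = ‖T' s‖ ^ 2 := by
      rw [hn]; simp only [hκdef]
      linear_combination (T' s 0 ^ 2 + T' s 1 ^ 2) * H1
        - (T s 0 * T' s 0 + T s 1 * T' s 1) * H2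
    calc |κ s| = Real.sqrt (κ s ^ 2) := (Real.sqrt_sq_eq_abs _).symm
    _ = Real.sqrt (‖T' s‖ ^ 2) := by rw [hsq]
    _ = ‖T' s‖ := Real.sqrt_sq (norm_nonneg _)
    _ ≤ ‖T' s‖ := le_rfl
  have hκint : IntegrableOn κ I volume := by
    refine ⟨hκcont.aestronglyMeasurable hImeas, ?_⟩
    refine lt_of_le_of_lt (le_trans ?_ hTC) ENNReal.ofReal_lt_top
    refine lintegral_mono_ae ((ae_restrict_iff' hImeas).2 (ae_of_all _ fun s hs => ?_))
    exact (ofReal_norm (κ s)).symm.le.trans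
      (le_trans (ENNReal.ofReal_le_ofReal (hκle s hs)) (ofReal_norm _).le)
  have hκreal : ∫ s in I, |κ s| ≤ π / 4 := by
    rw [← ENNReal.ofReal_le_ofReal_iff (by positivity),
      ofReal_integral_eq_lintegral_ofReal hκint.abs
        ((ae_restrict_iff' hImeas).2 (ae_of_all _ fun s _ => abs_nonneg _))]
    refine le_trans ?_ hTC
    refine lintegral_mono_ae ((ae_restrict_iff' hImeas).2 (ae_of_all _ fun s hs => ?_))
    exact le_trans (ENNReal.ofReal_le_ofReal (hκle s hs)) (ofReal_norm _).le
  -- projections onto the initial tangent direction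
  set p : ℝ → ℝ := fun s => T s₀ 0 * T s 0 + T s₀ 1 * T s 1 with hpdef
  set q : ℝ → ℝ := fun s => T s₀ 0 * T s 1 - T s₀ 1 * T s 0 with hqdef
  -- core geometric estimate
  have hcore : ∀ s₁ ∈ I, Real.sqrt 2 / 2 ≤ p s₁ := by
    intro s₁ hs₁
    set c := min s₀ s₁ with hcdef
    set d := max s₀ s₁ with hddef
    have hcd : c ≤ d := min_le_max
    have hJI : Icc c d ⊆ I := by
      rcases le_total s₀ s₁ with h | h
      · simpa [hcdef, hddef, min_eq_left h, max_eq_right h] using hI.out hs₀ hs₁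
      · simpa [hcdef, hddef, min_eq_right h, max_eq_left h] using hI.out hs₁ hs₀
    have hs₀J : s₀ ∈ Icc c d := ⟨min_le_left _ _, le_max_left _ _⟩
    have hs₁J : s₁ ∈ Icc c d := ⟨min_le_right _ _, le_max_right _ _⟩
    set κt : ℝ → ℝ := fun s => κ (max c (min s d)) with hκtdef
    have hclamp : ∀ s : ℝ, max c (min s d) ∈ Icc c d :=
      fun s => ⟨le_max_left _ _, max_le hcd (min_le_right _ _)⟩
    have hκtcont : Continuous κt :=
      hκcont.comp_continuous (continuous_const.max (continuous_id.min continuous_const))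
        (fun s => hJI (hclamp s))
    have hκteq : ∀ s ∈ Icc c d, κt s = κ s := by
      intro s hs
      simp [hκtdef, min_eq_left hs.2, max_eq_right hs.1]
    set θ : ℝ → ℝ := fun s => ∫ t in s₀..s, κt t with hθdef
    have hθd : ∀ s : ℝ, HasDerivAt θ (κt s) s :=
      fun s => (hκtcont.integral_hasStrictDerivAt s₀ s).hasDerivAt
    have hp : ∀ s ∈ Icc c d, HasDerivWithinAt p (-(κt s) * q s) (Icc c d) s := by
      intro s hs
      have hsI := hJI hs
      have h := (((hai 0 s hsI).const_mul (T s₀ 0)).add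
        ((hai 1 s hsI).const_mul (T s₀ 1))).mono hJI
      have he : T s₀ 0 * T' s 0 + T s₀ 1 * T' s 1 = -(κt s) * q s := by
        rw [hκteq s hs, (hab s hsI).1, (hab s hsI).2]
        simp only [hqdef]; ring
      rwa [he] at h
    have hq : ∀ s ∈ Icc c d, HasDerivWithinAt q (κt s * p s) (Icc c d) s := by
      intro s hs
      have hsI := hJI hs
      have h := (((hai 1 s hsI).const_mul (T s₀ 0)).sub
        ((hai 0 s hsI).const_mul (T s₀ 1))).mono hJI
      have he : T s₀ 0 * T' s 1 - T s₀ 1 * T' s 0 = κt s * p s := by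
        rw [hκteq s hs, (hab s hsI).1, (hab s hsI).2]
        simp only [hpdef]; ring
      rwa [he] at h
    set U : ℝ → ℝ := fun s => p s * Real.cos (θ s) + q s * Real.sin (θ s) with hUdef
    have hU : ∀ s ∈ Icc c d, HasDerivWithinAt U 0 (Icc c d) s := by
      intro s hs
      have hcos : HasDerivWithinAt (fun t => Real.cos (θ t))
          (-Real.sin (θ s) * κt s) (Icc c d) s := ((hθd s).hasDerivWithinAt).cos
      have hsin : HasDerivWithinAt (fun t => Real.sin (θ t))
          (Real.cos (θ s) * κt s) (Icc c d) s := ((hθd s).hasDerivWithinAt).sin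
      have h := ((hp s hs).mul hcos).add ((hq s hs).mul hsin)
      have he : (-(κt s) * q s) * Real.cos (θ s) + p s * (-Real.sin (θ s) * κt s)
          + ((κt s * p s) * Real.sin (θ s) + q s * (Real.cos (θ s) * κt s)) = 0 := by ring
      rwa [he] at h
    have hUconst : U s₁ = U s₀ := by
      have h := Convex.norm_image_sub_le_of_norm_hasDerivWithin_le
        (f' := fun _ : ℝ => (0 : ℝ)) (C := 0) hU (fun s _ => by simp) (convex_Icc c d) hs₀J hs₁J
      have h2 : ‖U s₁ - U s₀‖ ≤ 0 := by simpa using h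
      exact sub_eq_zero.1 (norm_le_zero_iff.1 h2)
    have hθ0 : θ s₀ = 0 := intervalIntegral.integral_same
    have hUs₀ : U s₀ = 1 := by
      simp only [hUdef, hpdef, hqdef, hθ0, Real.cos_zero, Real.sin_zero,
        mul_one, mul_zero, add_zero]
      linear_combination hnorm s₀ hs₀
    have hθb : |θ s₁| ≤ π / 4 := by
      have huIoc : Ι s₀ s₁ ⊆ Icc c d := fun t ht => by
        rcases Set.mem_uIoc.1 ht with ⟨h1, h2⟩ | ⟨h1, h2⟩
        · exact ⟨le_trans (min_le_left _ _) h1.le, le_trans h2 (le_max_right _ _)⟩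
        · exact ⟨le_trans (min_le_right _ _) h1.le, le_trans h2 (le_max_left _ _)⟩
      have h1 : |∫ t in s₀..s₁, κt t| ≤ ∫ t in Ι s₀ s₁, |κt t| := by
        simpa [Real.norm_eq_abs] using intervalIntegral.norm_integral_le_integral_norm_uIoc
          (f := κt) (a := s₀) (b := s₁) (μ := volume)
      have h2 : ∫ t in Ι s₀ s₁, |κt t| = ∫ t in Ι s₀ s₁, |κ t| :=
        setIntegral_congr_fun measurableSet_uIoc (fun t ht => by rw [hκteq t (huIoc ht)])
      have h3 : ∫ t in Ι s₀ s₁, |κ t| ≤ ∫ t in I, |κ t| :=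
        setIntegral_mono_set hκint.abs
          ((ae_restrict_iff' hImeas).2 (ae_of_all _ fun t _ => abs_nonneg _))
          (HasSubset.Subset.eventuallyLE (subset_trans huIoc hJI))
      calc |θ s₁| ≤ ∫ t in Ι s₀ s₁, |κt t| := h1
        _ = ∫ t in Ι s₀ s₁, |κ t| := h2
        _ ≤ ∫ t in I, |κ t| := h3
        _ ≤ π / 4 := hκreal
    have hcosb : Real.sqrt 2 / 2 ≤ Real.cos (θ s₁) := by
      rw [← Real.cos_abs, ← Real.cos_pi_div_four]
      exact Real.cos_le_cos_of_nonneg_of_le_pi (abs_nonneg _)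
        (by linarith [Real.pi_pos]) hθb
    have hpq : p s₁ ^ 2 + q s₁ ^ 2 = 1 := by
      simp only [hpdef, hqdef]
      linear_combination (T s₁ 0 ^ 2 + T s₁ 1 ^ 2) * hnorm s₀ hs₀ + hnorm s₁ hs₁
    have hU1 : p s₁ * Real.cos (θ s₁) + q s₁ * Real.sin (θ s₁) = 1 := by
      have h := hUconst.trans hUs₀
      simpa [hUdef] using h
    have hsc := Real.sin_sq_add_cos_sq (θ s₁)
    have hzero : (p s₁ - Real.cos (θ s₁)) ^ 2 = 0 := by
      have hle : (p s₁ - Real.cos (θ s₁)) ^ 2 ≤ 0 := by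
        nlinarith [sq_nonneg (q s₁ - Real.sin (θ s₁))]
      exact le_antisymm hle (sq_nonneg _)
    have hpeq : p s₁ = Real.cos (θ s₁) :=
      sub_eq_zero.1 (pow_eq_zero_iff (n := 2) (by norm_num) |>.1 hzero)
    rw [hpeq]
    exact hcosb
  -- the projection of the curve onto the initial tangent direction
  set f : ℝ → ℝ := fun s => T s₀ 0 * (γ s 0 - x₀ 0) + T s₀ 1 * (γ s 1 - x₀ 1) with hfdef
  have hfd : ∀ s ∈ I, HasDerivWithinAt f (p s) I s := by
    intro s hs
    exact (((hγi 0 s hs).sub_const _).const_mul _).add (((hγi 1 s hs).sub_const _).const_mul _)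
  have hppos : ∀ s ∈ I, 0 < p s := fun s hs =>
    lt_of_lt_of_le (by positivity) (hcore s hs)
  have hfcont : ContinuousOn f I :=
    fun s hs => ((hfd s hs).differentiableWithinAt).continuousWithinAt
  have hfmono : StrictMonoOn f I :=
    strictMonoOn_of_hasDerivWithinAt_pos hconv hfcont
      (fun s hs => (hfd s (interior_subset hs)).mono interior_subset)
      (fun s hs => hppos s (interior_subset hs))
  have hinj : InjOn f I := hfmono.injOn
  set g : ℝ → ℝ≥0∞ := fun u => ENNReal.ofReal (Real.exp (-u ^ 2 / (4 * l))) with hgdef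
  have hCOV : ∫⁻ u in f '' I, g u = ∫⁻ s in I, ENNReal.ofReal |p s| * g (f s) := by
    simpa only [ContinuousLinearMap.det_toSpanSingleton] using
      lintegral_image_eq_lintegral_abs_det_fderiv_mul volume hImeas
        (fun s hs => (hfd s hs).hasFDerivWithinAt) hinj g
  have hgauss : ∫⁻ u : ℝ, g u = ENNReal.ofReal (Real.sqrt (4 * π * l)) := by
    have hb : (0 : ℝ) < 1 / (4 * l) := by positivity
    have hintg : Integrable (fun u : ℝ => Real.exp (-(1 / (4 * l)) * u ^ 2)) :=
      integrable_exp_neg_mul_sq hb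
    have he : ∀ u : ℝ, -u ^ 2 / (4 * l) = -(1 / (4 * l)) * u ^ 2 := fun u => by ring
    simp only [hgdef, he]
    rw [← ofReal_integral_eq_lintegral_ofReal hintg (ae_of_all _ fun u => (Real.exp_pos _).le),
      integral_gaussian]
    congr 1
    rw [show π / (1 / (4 * l)) = 4 * π * l by field_simp]
  have hmain : (∫⁻ s in I, ENNReal.ofReal (Real.exp (-‖γ s - x₀‖ ^ 2 / (4 * l))))
      ≤ ENNReal.ofReal (Real.sqrt 2) * ENNReal.ofReal (Real.sqrt (4 * π * l)) := by
    have step1 : ∀ s ∈ I, ENNReal.ofReal (Real.exp (-‖γ s - x₀‖ ^ 2 / (4 * l)))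
        ≤ ENNReal.ofReal (Real.sqrt 2) * (ENNReal.ofReal |p s| * g (f s)) := by
      intro s hs
      have hn : ‖γ s - x₀‖ ^ 2 = (γ s 0 - x₀ 0) ^ 2 + (γ s 1 - x₀ 1) ^ 2 := by
        rw [EuclideanSpace.norm_eq, Real.sq_sqrt (by positivity)]
        simp [Fin.sum_univ_two, sq_abs, PiLp.sub_apply]
      have hfs2 : (f s) ^ 2 ≤ ‖γ s - x₀‖ ^ 2 := by
        rw [hn]; simp only [hfdef]
        nlinarith [hnorm s₀ hs₀, sq_nonneg (T s₀ 0 * (γ s 1 - x₀ 1) - T s₀ 1 * (γ s 0 - x₀ 0))]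
      have hexp : Real.exp (-‖γ s - x₀‖ ^ 2 / (4 * l)) ≤ Real.exp (-(f s) ^ 2 / (4 * l)) := by
        apply Real.exp_le_exp.2
        have h4 : (0 : ℝ) < 4 * l := by linarith
        rw [div_le_div_iff_of_pos_right h4]
        nlinarith [hfs2]
      have h1le : (1 : ℝ≥0∞) ≤ ENNReal.ofReal (Real.sqrt 2) * ENNReal.ofReal |p s| := by
        rw [← ENNReal.ofReal_mul (Real.sqrt_nonneg 2)]
        refine ENNReal.one_le_ofReal.2 ?_
        rw [abs_of_pos (hppos s hs)]
        have hmul : Real.sqrt 2 * (Real.sqrt 2 / 2) ≤ Real.sqrt 2 * p s :=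
          mul_le_mul_of_nonneg_left (hcore s hs) (Real.sqrt_nonneg 2)
        have hone : Real.sqrt 2 * (Real.sqrt 2 / 2) = 1 := by
          rw [← mul_div_assoc, Real.mul_self_sqrt (by norm_num : (0:ℝ) ≤ 2)]
          norm_num
        exact hone ▸ hmul
      calc ENNReal.ofReal (Real.exp (-‖γ s - x₀‖ ^ 2 / (4 * l)))
          ≤ g (f s) := ENNReal.ofReal_le_ofReal hexp
        _ = 1 * g (f s) := (one_mul _).symm
        _ ≤ (ENNReal.ofReal (Real.sqrt 2) * ENNReal.ofReal |p s|) * g (f s) :=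
            mul_le_mul_of_nonneg_right h1le zero_le
        _ = ENNReal.ofReal (Real.sqrt 2) * (ENNReal.ofReal |p s| * g (f s)) := by
            rw [mul_assoc]
    calc ∫⁻ s in I, ENNReal.ofReal (Real.exp (-‖γ s - x₀‖ ^ 2 / (4 * l)))
        ≤ ∫⁻ s in I, ENNReal.ofReal (Real.sqrt 2) * (ENNReal.ofReal |p s| * g (f s)) :=
          lintegral_mono_ae ((ae_restrict_iff' hImeas).2 (ae_of_all _ step1))
      _ = ENNReal.ofReal (Real.sqrt 2) * ∫⁻ s in I, ENNReal.ofReal |p s| * g (f s) :=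
          lintegral_const_mul' _ _ ENNReal.ofReal_ne_top
      _ = ENNReal.ofReal (Real.sqrt 2) * ∫⁻ u in f '' I, g u := by rw [hCOV]
      _ ≤ ENNReal.ofReal (Real.sqrt 2) * ∫⁻ u, g u :=
          mul_le_mul_of_nonneg_left (setLIntegral_le_lintegral _ _) zero_le
      _ = ENNReal.ofReal (Real.sqrt 2) * ENNReal.ofReal (Real.sqrt (4 * π * l)) := by
          rw [hgauss]
  have hG0 : ENNReal.ofReal (Real.sqrt (4 * π * l)) ≠ 0 :=
    (ENNReal.ofReal_pos.2 (Real.sqrt_pos.2 (by positivity))).ne'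
  calc (ENNReal.ofReal (Real.sqrt (4 * π * l)))⁻¹ *
        (∫⁻ s in I, ENNReal.ofReal (Real.exp (-‖γ s - x₀‖ ^ 2 / (4 * l))))
      ≤ (ENNReal.ofReal (Real.sqrt (4 * π * l)))⁻¹ *
        (ENNReal.ofReal (Real.sqrt 2) * ENNReal.ofReal (Real.sqrt (4 * π * l))) :=
        mul_le_mul_of_nonneg_left hmain zero_le
    _ = ENNReal.ofReal (Real.sqrt 2) * ((ENNReal.ofReal (Real.sqrt (4 * π * l)))⁻¹ *
        ENNReal.ofReal (Real.sqrt (4 * π * l))) := by ring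
    _ = ENNReal.ofReal (Real.sqrt 2) := by
        rw [ENNReal.inv_mul_cancel hG0 ENNReal.ofReal_ne_top, mul_one]
end
end

section
/- Let 0 < δ < 1 and let γ : (-2δ, 2δ) → ℝ² be a C² unit-speed curve with γ'(0) = (1,0), signed curvature κ(0) = κ₀ > 0, and (1/2)κ₀ ≤ κ(s) ≤ 2κ₀ for all s ∈ (-δ, δ). Then there exists R > 0 (depending only on κ₀, δ and γ(0)) such that for every Y ≥ R there is s ∈ (-δ, δ) for which the normal line of γ at γ(s) passes through (0, Y), i.e. ⟨(0, Y) - γ(s), γ'(s)⟩ = 0. -/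
open Real MeasureTheory Set Filter
open scoped RealInnerProductSpace ENNReal Topology

noncomputable section

lemma toR2_apply0 (x y : ℝ) : (toR2 x y) 0 = x := rfl
lemma toR2_apply1 (x y : ℝ) : (toR2 x y) 1 = y := rfl

lemma inner_toR2 (x y : ℝ) (v : R2) : ⟪toR2 x y, v⟫ = x * v 0 + y * v 1 := by
  simp [PiLp.inner_apply, Fin.sum_univ_two, toR2_apply0, toR2_apply1,
    RCLike.inner_apply]
  ring

/-- A `C²` unit-speed curve with `γ'(0) = (1,0)`, curvature `κ₀ > 0` at
`0` and curvature comparable to `κ₀` on `(-δ,δ)` has all normal-line intersections with the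
`y`-axis above some height `R`: for every `Y ≥ R` some normal line passes through `(0,Y)`. -/
theorem normal_line_surjectivity
    (δ κ₀ : ℝ) (hδ0 : 0 < δ) (hδ1 : δ < 1)
    (γ : ℝ → R2)
    (hγ : ContDiffOn ℝ 2 γ (Ioo (-(2 * δ)) (2 * δ)))
    (hunit : ∀ s ∈ Ioo (-(2 * δ)) (2 * δ), ‖deriv γ s‖ = 1)
    (htang : deriv γ 0 = toR2 1 0)
    (κ : ℝ → ℝ) (hκdef : ∀ s, κ s = ⟪deriv (deriv γ) s, Jrot (deriv γ s)⟫)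
    (hκ0 : κ 0 = κ₀) (hκ₀pos : 0 < κ₀)
    (hbound : ∀ s ∈ Ioo (-δ) δ, κ₀ / 2 ≤ κ s ∧ κ s ≤ 2 * κ₀) :
    ∃ R > 0, ∀ Y : ℝ, R ≤ Y →
      ∃ s ∈ Ioo (-δ) δ, ⟪toR2 0 Y - γ s, deriv γ s⟫ = 0 := by
  set U : Set ℝ := Ioo (-(2 * δ)) (2 * δ) with hU
  have hUopen : IsOpen U := isOpen_Ioo
  have h0U : (0 : ℝ) ∈ U := by constructor <;> nlinarith
  have hsub : Ioo (-δ) δ ⊆ U := Ioo_subset_Ioo (by linarith) (by linarith)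
  -- γ' is C¹ on U
  have hγ' : ContDiffOn ℝ 1 (deriv γ) U := by
    apply hγ.deriv_of_isOpen hUopen
    norm_num
  have hγ'diff : DifferentiableAt ℝ (deriv γ) 0 :=
    ((hγ'.differentiableOn one_ne_zero) 0 h0U).differentiableAt (hUopen.mem_nhds h0U)
  -- the y-component of γ'
  set g : ℝ → ℝ := fun s => (deriv γ s) 1 with hg
  have hg0 : g 0 = 0 := by simp [hg, htang, toR2_apply1]
  -- κ₀ is the y-component of γ''(0)
  have hκ0' : (deriv (deriv γ) 0) 1 = κ₀ := by
    have := hκdef 0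
    rw [hκ0, htang] at this
    have hJ : Jrot (toR2 1 0) = toR2 0 1 := by
      simp [Jrot, toR2_apply0, toR2_apply1]
    rw [hJ] at this
    have := this
    rw [real_inner_comm, inner_toR2] at this
    linarith [this]
  -- g has derivative κ₀ at 0
  have hgderiv : HasDerivAt g κ₀ 0 := by
    have h1 : HasDerivAt (deriv γ) (deriv (deriv γ) 0) 0 := hγ'diff.hasDerivAt
    have h2 := (EuclideanSpace.proj (𝕜 := ℝ) (1 : Fin 2)).hasFDerivAt.comp_hasDerivAt 0 h1
    simp [hκ0'] at h2
    exact h2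
  -- find s₊ ∈ (0,δ) with g s₊ > 0 and s₋ ∈ (-δ,0) with g s₋ < 0
  have hslope : Tendsto (slope g 0) (𝓝[≠] 0) (𝓝 κ₀) :=
    hasDerivAt_iff_tendsto_slope.mp hgderiv
  have hev : ∀ᶠ s in 𝓝[≠] (0:ℝ), 0 < slope g 0 s :=
    hslope.eventually (eventually_gt_nhds hκ₀pos)
  have hle_pos : 𝓝[>] (0:ℝ) ≤ 𝓝[≠] 0 := nhdsWithin_mono _ (fun x hx => ne_of_gt hx)
  have hle_neg : 𝓝[<] (0:ℝ) ≤ 𝓝[≠] 0 := nhdsWithin_mono _ (fun x hx => ne_of_lt hx)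
  have hmemp : ∀ᶠ s in 𝓝[>] (0:ℝ), s ∈ Ioo (0:ℝ) δ :=
    eventually_of_mem (Ioo_mem_nhdsGT_of_mem ⟨le_rfl, hδ0⟩) (fun x hx => hx)
  have hmemn : ∀ᶠ s in 𝓝[<] (0:ℝ), s ∈ Ioo (-δ) (0:ℝ) :=
    eventually_of_mem (Ioo_mem_nhdsLT_of_mem ⟨neg_lt_zero.mpr hδ0, le_rfl⟩) (fun x hx => hx)
  obtain ⟨sp, hsp_slope, hsp_mem⟩ := ((hev.filter_mono hle_pos).and hmemp).exists
  obtain ⟨sn, hsn_slope, hsn_mem⟩ := ((hev.filter_mono hle_neg).and hmemn).exists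
  have hsp_pos : 0 < sp := hsp_mem.1
  have hsn_neg : sn < 0 := hsn_mem.2
  have hgsp : 0 < g sp := by
    have : slope g 0 sp = g sp / sp := by simp [slope, hg0, div_eq_inv_mul]
    rw [this] at hsp_slope
    by_contra h
    push_neg at h
    nlinarith [div_nonpos_of_nonpos_of_nonneg h hsp_pos.le]
  have hgsn : g sn < 0 := by
    have : slope g 0 sn = g sn / sn := by simp [slope, hg0, div_eq_inv_mul]
    rw [this] at hsn_slope
    by_contra h
    push_neg at h
    have : g sn / sn ≤ 0 := div_nonpos_of_nonneg_of_nonpos h hsn_neg.le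
    linarith
  -- the function whose zero we seek, split off Y
  set c : ℝ → ℝ := fun s => ⟪γ s, deriv γ s⟫ with hc
  have hinner : ∀ Y s, ⟪toR2 0 Y - γ s, deriv γ s⟫ = Y * g s - c s := by
    intro Y s
    rw [inner_sub_left, inner_toR2]
    ring_nf
    rfl
  -- continuity of s ↦ Y * g s - c s on Icc sn sp
  have hIcc_sub : Icc sn sp ⊆ U := fun x hx =>
    hsub ⟨lt_of_lt_of_le hsn_mem.1 hx.1, lt_of_le_of_lt hx.2 hsp_mem.2⟩
  have hcontg : ContinuousOn g U := by
    exact (EuclideanSpace.proj (𝕜 := ℝ) (1 : Fin 2)).continuous.comp_continuousOn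
      hγ'.continuousOn
  have hcontc : ContinuousOn c U :=
    (hγ.continuousOn.inner hγ'.continuousOn)
  refine ⟨max 1 (max (c sp / g sp + 1) (c sn / g sn + 1)), lt_of_lt_of_le one_pos (le_max_left _ _), ?_⟩
  intro Y hY
  have hY1 : c sp / g sp < Y := by
    have := le_trans (le_max_of_le_right (le_max_left _ _)) hY
    linarith
  have hY2 : c sn / g sn < Y := by
    have := le_trans (le_max_of_le_right (le_max_right _ _)) hY
    linarith
  set f : ℝ → ℝ := fun s => Y * g s - c s with hf
  have hfsp : 0 < f sp := by
    have : c sp < Y * g sp := by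
      rw [div_lt_iff₀ hgsp] at hY1; linarith
    simp [hf]; linarith
  have hfsn : f sn < 0 := by
    have : Y * g sn < c sn := by
      rw [div_lt_iff_of_neg hgsn] at hY2; linarith
    simp [hf]; linarith
  have hcontf : ContinuousOn f (Icc sn sp) :=
    ((continuousOn_const.mul (hcontg.mono hIcc_sub)).sub (hcontc.mono hIcc_sub))
  have hsnsp : sn ≤ sp := le_trans hsn_neg.le hsp_pos.le
  have h0mem : (0:ℝ) ∈ Icc (f sn) (f sp) := ⟨hfsn.le, hfsp.le⟩
  obtain ⟨s, hsmem, hfs⟩ := intermediate_value_Icc hsnsp hcontf h0mem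
  refine ⟨s, ⟨lt_of_lt_of_le hsn_mem.1 hsmem.1, lt_of_le_of_lt hsmem.2 hsp_mem.2⟩, ?_⟩
  rw [hinner]
  exact hfs
end
end

section
/- Let γ : ℝ → ℝ² be an injective unit-speed (|γ'| = 1) curve with finite entropy, i.e. there exists Λ < ∞ such that (4πλ)^{-1/2} ∫_ℝ exp(-|γ(s) - x₀|²/(4λ)) ds ≤ Λ for all x₀ ∈ ℝ² and λ > 0. Then for every x₀ ∈ ℝ², |γ(s) - x₀| → ∞ as s → +∞ and as s → -∞. -/
open Real MeasureTheory Set Filter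
open scoped RealInnerProductSpace ENNReal

noncomputable section

private lemma seq_exists (P : ℝ → Prop) (h : ∀ a : ℝ, ∃ s, a ≤ s ∧ P s) :
    ∃ u : ℕ → ℝ, (∀ n, P (u n)) ∧ ∀ n, u n + 1 ≤ u (n + 1) := by
  let u : ℕ → ℝ := fun n =>
    Nat.rec (Classical.choose (h 0)) (fun _ prev => Classical.choose (h (prev + 1))) n
  refine ⟨u, fun n => ?_, fun n => ?_⟩
  · cases n with
    | zero => exact (Classical.choose_spec (h 0)).2
    | succ m => exact (Classical.choose_spec (h (u m + 1))).2
  · exact (Classical.choose_spec (h (u n + 1))).1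

/-- If a 1-Lipschitz function takes values below `R` arbitrarily far to the right, then its
`R+1`-sublevel set has infinite measure. -/
private lemma infinite_measure_of_frequently (f : ℝ → ℝ) (hf : LipschitzWith 1 f) (R : ℝ)
    (h : ∀ a : ℝ, ∃ s, a ≤ s ∧ f s < R) :
    volume {s : ℝ | f s ≤ R + 1} = ∞ := by
  obtain ⟨u, hu, hstep⟩ := seq_exists _ h
  have humono : ∀ m n : ℕ, m < n → u m + 1 ≤ u n := by
    intro m n hmn
    have hm : Monotone u := monotone_nat_of_le_succ fun k => by linarith [hstep k]
    calc u m + 1 ≤ u (m + 1) := hstep m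
      _ ≤ u n := hm hmn
  have hsub : ∀ n : ℕ, Ico (u n) (u n + 1) ⊆ {s : ℝ | f s ≤ R + 1} := by
    intro n t ht
    have h1 : dist (f t) (f (u n)) ≤ 1 * dist t (u n) := hf.dist_le_mul t (u n)
    rw [Real.dist_eq, Real.dist_eq, one_mul] at h1
    have h2 : |t - u n| = t - u n := abs_of_nonneg (by linarith [ht.1])
    have h3 := le_abs_self (f t - f (u n))
    have := hu n
    simp only [Set.mem_setOf_eq]
    have ht2 := ht.2
    linarith
  have hdisj : Pairwise (Function.onFun Disjoint fun n : ℕ => Ico (u n) (u n + 1)) := by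
    intro m n hmn
    rcases lt_or_gt_of_ne hmn with hlt | hlt
    · have := humono m n hlt
      exact Set.Ico_disjoint_Ico.2
        ((min_le_left _ _).trans ((by linarith : u m + 1 ≤ u n).trans (le_max_right _ _)))
    · have := humono n m hlt
      exact Set.Ico_disjoint_Ico.2
        ((min_le_right _ _).trans ((by linarith : u n + 1 ≤ u m).trans (le_max_left _ _)))
  have hmeas : volume (⋃ n : ℕ, Ico (u n) (u n + 1)) = ∞ := by
    rw [measure_iUnion hdisj fun n => measurableSet_Ico]
    have : ∀ n : ℕ, volume (Ico (u n) (u n + 1)) = 1 := by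
      intro n; rw [Real.volume_Ico]; norm_num
    simp only [this]
    exact ENNReal.tsum_const_eq_top_of_ne_zero one_ne_zero
  have := measure_mono (Set.iUnion_subset hsub) (μ := volume)
  rw [hmeas] at this
  exact top_unique this

/-- An injective unit-speed curve `γ : ℝ → ℝ²` with finite entropy is
proper: `|γ(s) - x₀| → ∞` as `s → ±∞`, for every `x₀`. -/
theorem dist_tendsto_atTop_of_finite_entropy
    (γ : ℝ → R2) (hinj : Function.Injective γ)
    (hunit : ∀ s : ℝ, ‖deriv γ s‖ = 1)
    (Λ : ℝ)
    (hΛ : ∀ x₀ : R2, ∀ l : ℝ, 0 < l →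
      (ENNReal.ofReal (Real.sqrt (4 * π * l)))⁻¹ *
        (∫⁻ s : ℝ, ENNReal.ofReal (Real.exp (-‖γ s - x₀‖ ^ 2 / (4 * l))))
      ≤ ENNReal.ofReal Λ) :
    ∀ x₀ : R2,
      Tendsto (fun s => ‖γ s - x₀‖) atTop atTop ∧
      Tendsto (fun s => ‖γ s - x₀‖) atBot atTop := by
  -- γ is differentiable and 1-Lipschitz
  have hdiff : Differentiable ℝ γ := by
    intro s
    by_contra hcon
    have := hunit s
    rw [deriv_zero_of_not_differentiableAt hcon, norm_zero] at this
    norm_num at this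
  have hlip : LipschitzWith 1 γ := by
    refine lipschitzWith_of_nnnorm_deriv_le hdiff fun x => ?_
    have := hunit x
    rw [← NNReal.coe_le_coe, coe_nnnorm, this, NNReal.coe_one]
  intro x₀
  set f : ℝ → ℝ := fun s => ‖γ s - x₀‖ with hf
  have hflip : LipschitzWith 1 f := by
    have h2 : LipschitzWith 1 (fun s => γ s - x₀) :=
      (LipschitzWith.sub hlip (LipschitzWith.const x₀)).weaken (by norm_num)
    simpa [Function.comp_def, hf] using lipschitzWith_one_norm.comp h2
  -- the sublevel sets of f have finite measure
  have hfin : ∀ R : ℝ, volume {s : ℝ | f s ≤ R} ≠ ∞ := by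
    intro R
    have h1 := hΛ x₀ 1 one_pos
    set I := ∫⁻ s : ℝ, ENNReal.ofReal (Real.exp (-‖γ s - x₀‖ ^ 2 / (4 * 1))) with hI
    have hc0 : ENNReal.ofReal (Real.sqrt (4 * π * 1)) ≠ 0 := by
      rw [ne_eq, ENNReal.ofReal_eq_zero, not_le]
      exact Real.sqrt_pos.2 (by positivity)
    have hIle : I ≤ ENNReal.ofReal (Real.sqrt (4 * π * 1)) * ENNReal.ofReal Λ :=
      (ENNReal.inv_mul_le_iff hc0 ENNReal.ofReal_ne_top).1 h1
    have hIne : I ≠ ∞ :=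
      fun hcon => by rw [hcon] at hIle; exact (ENNReal.mul_ne_top ENNReal.ofReal_ne_top
        ENNReal.ofReal_ne_top) (top_unique hIle)
    -- lower bound
    have hlow : ENNReal.ofReal (Real.exp (-R ^ 2 / 4)) * volume {s : ℝ | f s ≤ R} ≤ I := by
      calc ENNReal.ofReal (Real.exp (-R ^ 2 / 4)) * volume {s : ℝ | f s ≤ R}
          = ∫⁻ _ in {s : ℝ | f s ≤ R}, ENNReal.ofReal (Real.exp (-R ^ 2 / 4)) :=
            (setLIntegral_const _ _).symm
        _ ≤ ∫⁻ s in {s : ℝ | f s ≤ R},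
              ENNReal.ofReal (Real.exp (-‖γ s - x₀‖ ^ 2 / (4 * 1))) := by
            have hmγ : Measurable fun s : ℝ => ‖γ s - x₀‖ :=
              (hlip.continuous.sub continuous_const).norm.measurable
            refine setLIntegral_mono (ENNReal.measurable_ofReal.comp
              (Real.measurable_exp.comp
                (((hmγ.pow_const 2).neg.div_const (4 * 1))))) ?_
            · intro s hs
              refine ENNReal.ofReal_le_ofReal (Real.exp_le_exp.2 ?_)
              have hsR : ‖γ s - x₀‖ ≤ R := hs
              have : ‖γ s - x₀‖ ^ 2 ≤ R ^ 2 := by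
                have := norm_nonneg (γ s - x₀)
                nlinarith
              rw [mul_one]
              linarith
        _ ≤ I := setLIntegral_le_lintegral _ _
    intro hcon
    rw [hcon, ENNReal.mul_top (by
      rw [ne_eq, ENNReal.ofReal_eq_zero, not_le]; exact Real.exp_pos _)] at hlow
    exact hIne (top_unique hlow)
  constructor
  · rw [tendsto_atTop]
    by_contra hcon
    push_neg at hcon
    obtain ⟨R, hR⟩ := hcon
    simp only [← not_le] at hR
    have hfreq : ∀ a : ℝ, ∃ s, a ≤ s ∧ f s < R := by
      intro a
      obtain ⟨b, hb, hPb⟩ := frequently_atTop.1 hR a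
      exact ⟨b, hb, lt_of_not_ge hPb⟩
    exact hfin (R + 1) (infinite_measure_of_frequently f hflip R hfreq)
  · rw [tendsto_atTop]
    by_contra hcon
    push_neg at hcon
    obtain ⟨R, hR⟩ := hcon
    simp only [← not_le] at hR
    -- transfer to atTop via negation
    have hglip : LipschitzWith 1 (fun s : ℝ => f (-s)) := by
      have : LipschitzWith 1 (fun s : ℝ => -s) := LipschitzWith.id.neg
      simpa [Function.comp_def] using hflip.comp this
    have hfreq : ∀ a : ℝ, ∃ s, a ≤ s ∧ f (-s) < R := by
      intro a
      obtain ⟨b, hb, hPb⟩ := frequently_atBot.1 hR (-a)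
      exact ⟨-b, by linarith, by simpa using lt_of_not_ge hPb⟩
    have hinf := infinite_measure_of_frequently _ hglip R hfreq
    have hpre : {s : ℝ | f (-s) ≤ R + 1} = (fun s : ℝ => -s) ⁻¹' {s : ℝ | f s ≤ R + 1} := rfl
    rw [hpre] at hinf
    have : volume ((fun s : ℝ => -s) ⁻¹' {s : ℝ | f s ≤ R + 1}) = volume {s : ℝ | f s ≤ R + 1} := by
      simpa using Measure.measure_preimage_neg volume {s : ℝ | f s ≤ R + 1}
    rw [this] at hinf
    exact hfin (R + 1) hinf
end
end

section
/- Let a > 0 and k ≠ 0, and let γ : ℝ → ℝ² parametrize the logarithmic spiral by γ(φ) = a e^{kφ} (cos φ, sin φ). Then for every x₀ ∈ ℝ² and every λ > 0, (4πλ)^{-1/2} ∫_ℝ exp(-|γ(φ) - x₀|²/(4λ)) |γ'(φ)| dφ ≤ √(1 + k²)/|k|; that is, the entropy of the logarithmic spiral is at most 1/|sin(arctan k)| = √(1 + k²)/|k|. -/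
open Real MeasureTheory Set Filter
open scoped RealInnerProductSpace ENNReal

noncomputable section

lemma norm_toR2 (x y : ℝ) : ‖toR2 x y‖ = Real.sqrt (x ^ 2 + y ^ 2) := by
  simp [toR2, EuclideanSpace.norm_eq, Fin.sum_univ_two, sq_abs]

lemma hasDerivAt_toR2 {A B : ℝ → ℝ} {A' B' : ℝ} {φ : ℝ} (hA : HasDerivAt A A' φ)
    (hB : HasDerivAt B B' φ) :
    HasDerivAt (fun t => toR2 (A t) (B t)) (toR2 A' B') φ := by
  have hpi : HasDerivAt (fun t => (![A t, B t] : Fin 2 → ℝ)) ![A', B'] φ := by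
    apply hasDerivAt_pi.2
    intro i
    fin_cases i <;> simpa
  have := ((PiLp.continuousLinearEquiv 2 ℝ
    (fun _ : Fin 2 => ℝ)).symm.toContinuousLinearMap).hasFDerivAt.comp_hasDerivAt φ hpi
  exact this

/-- The logarithmic spiral `γ(φ) = a e^{kφ}(cos φ, sin φ)` (`a > 0`,
`k ≠ 0`) has all Gaussian weighted lengths, hence entropy, at most
`√(1+k²)/|k| = 1/|sin (arctan k)|`. -/
theorem entropy_log_spiral_le
    (a k : ℝ) (ha : 0 < a) (hk : k ≠ 0)
    (γ : ℝ → R2)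
    (hγ : ∀ φ : ℝ, γ φ = toR2 (a * Real.exp (k * φ) * Real.cos φ)
                         (a * Real.exp (k * φ) * Real.sin φ)) :
    ∀ x₀ : R2, ∀ l : ℝ, 0 < l →
      (ENNReal.ofReal (Real.sqrt (4 * π * l)))⁻¹ *
        (∫⁻ φ : ℝ, ENNReal.ofReal
          (Real.exp (-‖γ φ - x₀‖ ^ 2 / (4 * l)) * ‖deriv γ φ‖))
      ≤ ENNReal.ofReal (Real.sqrt (1 + k ^ 2) / |k|) := by
  intro x₀ l hl
  have hγfun : γ = fun φ => toR2 (a * Real.exp (k * φ) * Real.cos φ)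
      (a * Real.exp (k * φ) * Real.sin φ) := funext hγ
  set ρ := ‖x₀‖ with hρ
  have hb : (0:ℝ) < 1 / (4 * l) := by positivity
  set b : ℝ := 1 / (4 * l) with hbdef
  set C : ℝ := Real.sqrt (1 + k ^ 2) / |k| with hCdef
  have hC0 : 0 ≤ C := by positivity
  set f : ℝ → ℝ := fun φ => a * Real.exp (k * φ) with hfdef
  set f' : ℝ → ℝ := fun φ => a * Real.exp (k * φ) * k with hf'def
  set G : ℝ → ℝ := fun r => Real.exp (-b * (r - ρ) ^ 2) with hGdef
  have hfpos : ∀ φ, 0 < f φ := fun φ => by positivity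
  -- derivative of f
  have hfd : ∀ φ, HasDerivAt f (f' φ) φ := by
    intro φ
    have h1 : HasDerivAt (fun x : ℝ => k * x) k φ := by
      simpa using (hasDerivAt_id φ).const_mul k
    have := h1.exp.const_mul a
    simp only [hfdef, hf'def]
    exact this.congr_deriv (by ring)
  -- derivative of γ
  have hγd : ∀ φ, HasDerivAt γ
      (toR2 (f' φ * Real.cos φ - f φ * Real.sin φ)
            (f' φ * Real.sin φ + f φ * Real.cos φ)) φ := by
    intro φ
    rw [hγfun]
    have hA : HasDerivAt (fun t => f t * Real.cos t)
        (f' φ * Real.cos φ - f φ * Real.sin φ) φ := by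
      have := (hfd φ).mul (Real.hasDerivAt_cos φ)
      exact this.congr_deriv (by ring)
    have hB : HasDerivAt (fun t => f t * Real.sin t)
        (f' φ * Real.sin φ + f φ * Real.cos φ) φ := by
      have := (hfd φ).mul (Real.hasDerivAt_sin φ)
      exact this.congr_deriv (by ring)
    exact hasDerivAt_toR2 hA hB
  -- norm of deriv
  have hnd : ∀ φ, ‖deriv γ φ‖ = Real.sqrt (1 + k ^ 2) * f φ := by
    intro φ
    rw [(hγd φ).deriv, norm_toR2]
    have hcs : Real.sin φ ^ 2 + Real.cos φ ^ 2 = 1 := Real.sin_sq_add_cos_sq φ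
    have h1 : (f' φ * Real.cos φ - f φ * Real.sin φ) ^ 2
        + (f' φ * Real.sin φ + f φ * Real.cos φ) ^ 2 = (1 + k ^ 2) * (f φ) ^ 2 := by
      simp only [hf'def, hfdef]
      nlinarith [hcs]
    rw [h1, Real.sqrt_mul (by positivity), Real.sqrt_sq (hfpos φ).le]
  -- norm of γ
  have hnγ : ∀ φ, ‖γ φ‖ = f φ := by
    intro φ
    rw [hγ φ, norm_toR2]
    have hcs : Real.sin φ ^ 2 + Real.cos φ ^ 2 = 1 := Real.sin_sq_add_cos_sq φ
    have h1 : (a * Real.exp (k * φ) * Real.cos φ) ^ 2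
        + (a * Real.exp (k * φ) * Real.sin φ) ^ 2 = (f φ) ^ 2 := by
      simp only [hfdef]; nlinarith [hcs]
    rw [h1, Real.sqrt_sq (hfpos φ).le]
  -- pointwise bound
  have key : ∀ φ, Real.exp (-‖γ φ - x₀‖ ^ 2 / (4 * l)) * ‖deriv γ φ‖
      ≤ C * (|f' φ| * G (f φ)) := by
    intro φ
    have h1 : (f φ - ρ) ^ 2 ≤ ‖γ φ - x₀‖ ^ 2 := by
      have := abs_norm_sub_norm_le (γ φ) x₀
      rw [hnγ φ] at this
      calc (f φ - ρ) ^ 2 = |f φ - ρ| ^ 2 := (sq_abs _).symm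
        _ ≤ ‖γ φ - x₀‖ ^ 2 := by
            apply pow_le_pow_left₀ (abs_nonneg _) this
    have h2 : Real.exp (-‖γ φ - x₀‖ ^ 2 / (4 * l)) ≤ G (f φ) := by
      apply Real.exp_le_exp.2
      have heq : -b * (f φ - ρ) ^ 2 = -(f φ - ρ) ^ 2 / (4 * l) := by
        rw [hbdef]; field_simp
      show -‖γ φ - x₀‖ ^ 2 / (4 * l) ≤ -b * (f φ - ρ) ^ 2
      rw [heq]
      exact (div_le_div_iff_of_pos_right (by positivity)).2 (by linarith)
    have h3 : ‖deriv γ φ‖ = C * |f' φ| := by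
      rw [hnd φ, hCdef, hf'def]
      rw [abs_mul, abs_of_pos (hfpos φ)]
      rw [hfdef]
      field_simp
    calc Real.exp (-‖γ φ - x₀‖ ^ 2 / (4 * l)) * ‖deriv γ φ‖
        ≤ G (f φ) * (C * |f' φ|) := by
          rw [h3]
          apply mul_le_mul_of_nonneg_right h2 (by positivity)
      _ = C * (|f' φ| * G (f φ)) := by ring
  -- injectivity of f
  have hinj : InjOn f univ := by
    intro x _ y _ hxy
    simp only [hfdef] at hxy
    have := mul_left_cancel₀ ha.ne' hxy
    have := Real.exp_eq_exp.mp this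
    exact mul_left_cancel₀ hk this
  -- range of f
  have hrange : f '' univ = Ioi (0:ℝ) := by
    rw [image_univ]
    ext r
    constructor
    · rintro ⟨φ, rfl⟩
      exact hfpos φ
    · intro hr
      have hr' : (0:ℝ) < r := hr
      refine ⟨Real.log (r / a) / k, ?_⟩
      simp only [hfdef]
      rw [mul_div_cancel₀ _ hk, Real.exp_log (by positivity), mul_comm,
        div_mul_cancel₀ r ha.ne']
  -- integrability of G
  have hGint : Integrable G := by
    have := integrable_exp_neg_mul_sq hb
    exact this.comp_sub_right ρ
  have hGnn : ∀ r, 0 ≤ G r := fun r => Real.exp_nonneg _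
  have hderivW : ∀ x ∈ (univ : Set ℝ), HasDerivWithinAt f (f' x) univ x :=
    fun x _ => (hfd x).hasDerivWithinAt
  -- change of variables
  have hIone : ∫ r in Ioi (0:ℝ), G r = ∫ φ, |f' φ| * G (f φ) := by
    rw [← hrange,
      integral_image_eq_integral_abs_deriv_smul MeasurableSet.univ hderivW hinj G]
    simp [smul_eq_mul]
  have hHint : Integrable (fun φ => |f' φ| * G (f φ)) := by
    have h1 : IntegrableOn G (f '' univ) := by
      rw [hrange]; exact hGint.integrableOn
    have := (integrableOn_image_iff_integrableOn_abs_deriv_smul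
      MeasurableSet.univ hderivW hinj G).mp h1
    rw [integrableOn_univ] at this
    simpa [smul_eq_mul] using this
  -- value bound
  have hval : ∫ φ, |f' φ| * G (f φ) ≤ Real.sqrt (4 * π * l) := by
    rw [← hIone]
    calc ∫ r in Ioi (0:ℝ), G r ≤ ∫ r, G r :=
          setIntegral_le_integral hGint (Filter.Eventually.of_forall hGnn)
      _ = ∫ x, Real.exp (-b * x ^ 2) :=
          integral_sub_right_eq_self (fun x => Real.exp (-b * x ^ 2)) ρ
      _ = Real.sqrt (π / b) := integral_gaussian b
      _ = Real.sqrt (4 * π * l) := by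
          rw [hbdef]
          congr 1
          field_simp
  have hHnn : 0 ≤ᵐ[volume] fun φ => |f' φ| * G (f φ) :=
    Filter.Eventually.of_forall fun φ => mul_nonneg (abs_nonneg _) (hGnn _)
  -- main lintegral bound
  set c : ℝ≥0∞ := ENNReal.ofReal (Real.sqrt (4 * π * l)) with hcdef
  have hc0 : c ≠ 0 := by
    rw [hcdef]
    simp only [ne_eq, ENNReal.ofReal_eq_zero, not_le]
    positivity
  have hcT : c ≠ ⊤ := ENNReal.ofReal_ne_top
  have hImain : (∫⁻ φ : ℝ, ENNReal.ofReal
      (Real.exp (-‖γ φ - x₀‖ ^ 2 / (4 * l)) * ‖deriv γ φ‖)) ≤ ENNReal.ofReal C * c := by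
    calc (∫⁻ φ : ℝ, ENNReal.ofReal
        (Real.exp (-‖γ φ - x₀‖ ^ 2 / (4 * l)) * ‖deriv γ φ‖))
        ≤ ∫⁻ φ : ℝ, ENNReal.ofReal (C * (|f' φ| * G (f φ))) := by
          apply lintegral_mono
          intro φ
          exact ENNReal.ofReal_le_ofReal (key φ)
      _ = ∫⁻ φ : ℝ, ENNReal.ofReal C * ENNReal.ofReal (|f' φ| * G (f φ)) := by
          congr 1
          funext φ
          rw [ENNReal.ofReal_mul hC0]
      _ = ENNReal.ofReal C * ∫⁻ φ : ℝ, ENNReal.ofReal (|f' φ| * G (f φ)) :=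
          lintegral_const_mul' _ _ ENNReal.ofReal_ne_top
      _ = ENNReal.ofReal C * ENNReal.ofReal (∫ φ, |f' φ| * G (f φ)) := by
          rw [← ofReal_integral_eq_lintegral_ofReal hHint hHnn]
      _ ≤ ENNReal.ofReal C * c := by
          gcongr
          exact ENNReal.ofReal_le_ofReal hval
  calc c⁻¹ * (∫⁻ φ : ℝ, ENNReal.ofReal
      (Real.exp (-‖γ φ - x₀‖ ^ 2 / (4 * l)) * ‖deriv γ φ‖))
      ≤ c⁻¹ * (ENNReal.ofReal C * c) := by gcongr
    _ = ENNReal.ofReal C := by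
        rw [mul_comm (ENNReal.ofReal C) c, ← mul_assoc,
          ENNReal.inv_mul_cancel hc0 hcT, one_mul]
end
end
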